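/- Let α, β, γ, δ be real numbers with σ = (α+β+γ+δ)/2 such that cos α · cos γ = cos β · cos δ. Then sin(σ−α)·sin(σ−γ) = (1/2)(sin α · sin γ + sin β · sin δ) and likewise sin(σ−β)·sin(σ−δ) = (1/2)(sin α · sin γ + sin β · sin δ). -/
import Mathlib

theorem stmt_11 (α β γ δ : ℝ) (σ : ℝ) (hσ : σ = (α + β + γ + δ) / 2)
    (h : Real.cos α * Real.cos γ = Real.cos β * Real.cos δ) :
    Real.sin (σ - α) * Real.sin (σ - γ) =
      (1 / 2) * (Real.sin α * Real.sin γ + Real.sin β * Real.sin δ) ∧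
    Real.sin (σ - β) * Real.sin (σ - δ) =
      (1 / 2) * (Real.sin α * Real.sin γ + Real.sin β * Real.sin δ) := by
  have keys : ∀ X Y : ℝ, Real.sin X * Real.sin Y = (Real.cos (X - Y) - Real.cos (X + Y)) / 2 := by
    intro X Y; rw [Real.cos_sub, Real.cos_add]; ring
  have keyc : ∀ X Y : ℝ, Real.cos X * Real.cos Y = (Real.cos (X - Y) + Real.cos (X + Y)) / 2 := by
    intro X Y; rw [Real.cos_sub, Real.cos_add]; ring
  rw [keyc, keyc] at h
  subst hσ
  have e1 : ((α + β + γ + δ) / 2 - α) - ((α + β + γ + δ) / 2 - γ) = -(α - γ) := by ring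
  have e2 : ((α + β + γ + δ) / 2 - α) + ((α + β + γ + δ) / 2 - γ) = β + δ := by ring
  have e3 : ((α + β + γ + δ) / 2 - β) - ((α + β + γ + δ) / 2 - δ) = -(β - δ) := by ring
  have e4 : ((α + β + γ + δ) / 2 - β) + ((α + β + γ + δ) / 2 - δ) = α + γ := by ring
  constructor
  · rw [keys, keys, keys, e1, e2, Real.cos_neg]; linarith
  · rw [keys, keys, keys, e3, e4, Real.cos_neg]; linarith
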